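/- Let 1 < p < θ and let t₀ := √(pθ(p+1)/(θ+1)) + √(pθ(p+1)/(θ+1) − √(pθ(p+1)/(θ+1))). Then L(2t₀) < 0, and every real number s* with s* > 2 and L(s*) = 0 satisfies s* > 2t₀. -/

import Mathlib

noncomputable section

/-- The quartic polynomial `L`. -/
def Lpoly (p θ s : ℝ) : ℝ :=
  s ^ 4 - (16 * p * θ * (p + 1) / (θ + 1)) * s ^ 2
    + (16 * p * θ * (p + 1) * (p + θ + 2) / (θ + 1) ^ 2) * s
    - 16 * p * θ * (p + 1) ^ 2 / (θ + 1) ^ 2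

set_option maxHeartbeats 2000000 in
/-- for `1 < p < θ`, `L(2t₀) < 0` and every root `s* > 2` of `L`
satisfies `s* > 2t₀`. -/
theorem stmt7 (p θ t₀ : ℝ) (hp : 1 < p) (hpθ : p < θ)
    (ht₀ : t₀ = Real.sqrt (p * θ * (p + 1) / (θ + 1)) +
      Real.sqrt (p * θ * (p + 1) / (θ + 1) - Real.sqrt (p * θ * (p + 1) / (θ + 1)))) :
    Lpoly p θ (2 * t₀) < 0 ∧
      ∀ s' : ℝ, 2 < s' → Lpoly p θ s' = 0 → 2 * t₀ < s' := by
  have hθ0 : (0:ℝ) < θ + 1 := by linarith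
  have hθne : (θ:ℝ) + 1 ≠ 0 := ne_of_gt hθ0
  have hA1 : 1 < p * θ * (p + 1) / (θ + 1) := by
    rw [lt_div_iff₀ hθ0]
    nlinarith [mul_pos (show (0:ℝ) < θ by linarith)
      (mul_pos (show (0:ℝ) < p - 1 by linarith) (show (0:ℝ) < p + 2 by linarith))]
  set a := Real.sqrt (p * θ * (p + 1) / (θ + 1)) with ha
  have ha0 : 0 ≤ a := Real.sqrt_nonneg _
  have ha2 : a ^ 2 = p * θ * (p + 1) / (θ + 1) := Real.sq_sqrt (by linarith)
  have ha1 : 1 < a := by nlinarith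
  have hsub : 0 < p * θ * (p + 1) / (θ + 1) - a := by nlinarith
  set b := Real.sqrt (p * θ * (p + 1) / (θ + 1) - a) with hbd
  have hb0 : 0 < b := Real.sqrt_pos.2 hsub
  have hb2 : b ^ 2 = a ^ 2 - a := by
    rw [hbd, Real.sq_sqrt hsub.le, ha2]
  have hab1 : a - b < 1 := by nlinarith
  have hab2 : 1 < a + b := by linarith
  subst ht₀
  -- coefficient rewrites
  have hc1 : 16 * p * θ * (p + 1) / (θ + 1) = 16 * a ^ 2 := by
    rw [ha2]; ring
  have hc2 : 16 * p * θ * (p + 1) * (p + θ + 2) / (θ + 1) ^ 2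
      = 16 * a ^ 2 * (p + θ + 2) / (θ + 1) := by
    rw [ha2]; field_simp
  have hc3 : 16 * p * θ * (p + 1) ^ 2 / (θ + 1) ^ 2
      = 16 * a ^ 2 * (p + 1) / (θ + 1) := by
    rw [ha2]; field_simp
  have hLM : ∀ t : ℝ, Lpoly p θ (2 * t)
      = 16 * ((t ^ 2 - 2 * a * t + a) * (t ^ 2 + 2 * a * t - a))
        + 16 * (a ^ 2 * (p - θ) * (2 * t - 1)) / (θ + 1) := by
    intro t
    simp only [Lpoly]
    rw [hc1, hc2, hc3]
    field_simp
    ring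
  have ha2pos : (0:ℝ) < a ^ 2 := by positivity
  have hrneg : ∀ t : ℝ, 1 < t → 16 * (a ^ 2 * (p - θ) * (2 * t - 1)) / (θ + 1) < 0 := by
    intro t ht
    apply div_neg_of_neg_of_pos _ hθ0
    have h1 : a ^ 2 * (p - θ) < 0 := mul_neg_of_pos_of_neg ha2pos (by linarith)
    nlinarith
  have hneg : ∀ t : ℝ, 1 < t → t ≤ a + b → Lpoly p θ (2 * t) < 0 := by
    intro t ht1 ht2
    have hq : (t ^ 2 - 2 * a * t + a) ≤ 0 := by
      nlinarith [mul_nonpos_of_nonneg_of_nonpos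
        (show (0:ℝ) ≤ t - (a - b) by linarith)
        (show t - (a + b) ≤ 0 by linarith), hb2]
    have hw : 0 < t ^ 2 + 2 * a * t - a := by
      nlinarith [mul_pos (show (0:ℝ) < a by linarith) (show (0:ℝ) < 2 * t - 1 by linarith),
        mul_pos (show (0:ℝ) < t by linarith) (show (0:ℝ) < t by linarith)]
    have hqw : 16 * ((t ^ 2 - 2 * a * t + a) * (t ^ 2 + 2 * a * t - a)) ≤ 0 := by
      nlinarith [mul_nonpos_of_nonpos_of_nonneg hq hw.le]
    have hr := hrneg t ht1
    rw [hLM t]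
    linarith
  constructor
  · exact hneg (a + b) hab2 le_rfl
  · intro s' hs hLs
    by_contra hcon
    push_neg at hcon
    have h1 : 1 < s' / 2 := by linarith
    have h2 : s' / 2 ≤ a + b := by linarith
    have h3 := hneg (s' / 2) h1 h2
    rw [show 2 * (s' / 2) = s' by ring, hLs] at h3
    exact lt_irrefl 0 h3
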